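/- The low-sensitivity interestingness function Int_p has sensitivity at most 1 and range [0, |D_c|]. Precisely: (a) for every clustering function f : T → C, cluster label c ∈ C, attribute A, dataset D and tuple t, writing D' = D + {t}, one has |Int_p(D', f, c, A) − Int_p(D, f, c, A)| ≤ 1; and (b) for every dataset D, 0 ≤ Int_p(D, f, c, A) ≤ |D_c|, where D_c is the sub-multiset of tuples t of D with f(t) = c. -/

import Mathlib

noncomputable section

/-- The cluster of label `c`: the sub-multiset of tuples of `D` mapped to `c` by `f`. -/
def cl {T C : Type*} [DecidableEq C] (D : Multiset T) (f : T → C) (c : C) : Multiset T :=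
  D.filter (fun t => f t = c)

/-- The low-sensitivity interestingness of attribute `A` for cluster `c`:
`Int_p(D, f, c, A) = (1/2) Σ_{a∈V} | cnt_{A=a}(D_c) − (|D_c|/|D|)·cnt_{A=a}(D) |`
(equal to `0` when `D` is empty, by the convention `x / 0 = 0`). -/
def Intp {T V C : Type*} [Fintype V] [DecidableEq V] [DecidableEq C]
    (D : Multiset T) (f : T → C) (c : C) (A : T → V) : ℝ :=
  (1 / 2) * ∑ a : V,
    |(((cl D f c).map A).count a : ℝ) -
      ((Multiset.card (cl D f c) : ℝ) / (Multiset.card D : ℝ)) * ((D.map A).count a : ℝ)|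

lemma sum_count_map {T V : Type*} [Fintype V] [DecidableEq V] (A : T → V) (s : Multiset T) :
    ∑ a : V, ((s.map A).count a : ℝ) = (Multiset.card s : ℝ) := by
  rw [← Nat.cast_sum]
  congr 1
  rw [← Multiset.card_map A s, ← Multiset.toFinset_sum_count_eq (s.map A)]
  exact (Finset.sum_subset (Finset.subset_univ _) (fun x _ hx =>
    Multiset.count_eq_zero.2 (fun h => hx (Multiset.mem_toFinset.2 h)))).symm

lemma key_core {V : Type*} [Fintype V] (X X' h δ : V → ℝ) (c1 c2 n : ℝ)
    (hstep : ∀ a, |X' a - X a| ≤ c1 * δ a + c2 * h a)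
    (hsh : ∑ a : V, h a = n) (hsδ : ∑ a : V, δ a = 1)
    (hfin : c1 + c2 * n ≤ 2) :
    |(1/2 : ℝ) * (∑ a : V, |X' a|) - (1/2) * (∑ a : V, |X a|)| ≤ 1 := by
  have h1 : (1/2:ℝ) * (∑ a : V, |X' a|) - (1/2) * (∑ a : V, |X a|)
      = (1/2) * ∑ a : V, (|X' a| - |X a|) := by
    rw [Finset.sum_sub_distrib, mul_sub]
  calc |(1/2 : ℝ) * (∑ a : V, |X' a|) - (1/2) * (∑ a : V, |X a|)|
      = (1/2) * |∑ a : V, (|X' a| - |X a|)| := by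
        rw [h1, abs_mul]; norm_num
    _ ≤ (1/2) * ∑ a : V, |(|X' a| - |X a|)| :=
        mul_le_mul_of_nonneg_left (Finset.abs_sum_le_sum_abs _ _) (by norm_num)
    _ ≤ (1/2) * ∑ a : V, |X' a - X a| :=
        mul_le_mul_of_nonneg_left (Finset.sum_le_sum fun a _ =>
          abs_abs_sub_abs_le_abs_sub _ _) (by norm_num)
    _ ≤ (1/2) * ∑ a : V, (c1 * δ a + c2 * h a) :=
        mul_le_mul_of_nonneg_left (Finset.sum_le_sum fun a _ => hstep a) (by norm_num)
    _ = (1/2) * (c1 + c2 * n) := by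
        rw [Finset.sum_add_distrib, ← Finset.mul_sum, ← Finset.mul_sum, hsδ, hsh, mul_one]
    _ ≤ 1 := by linarith

lemma intp_single {T V C : Type*} [Fintype V] [DecidableEq V] [DecidableEq C]
    (t : T) (f : T → C) (c : C) (A : T → V) :
    Intp (t ::ₘ (0 : Multiset T)) f c A = 0 := by
  by_cases hc : f t = c <;>
    simp [Intp, cl, Multiset.filter_singleton, hc, Multiset.count_singleton]

lemma main_sens {T V C : Type*} [Fintype V] [DecidableEq V] [DecidableEq C]
    (f : T → C) (c : C) (A : T → V)
    (D : Multiset T) (t : T) : |Intp (t ::ₘ D) f c A - Intp D f c A| ≤ 1 := by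
  rcases eq_or_ne D 0 with rfl | hD
  · rw [intp_single]
    simp [Intp, cl]
  -- notation
  set n : ℝ := (Multiset.card D : ℝ) with hn_def
  set m : ℝ := (Multiset.card (cl D f c) : ℝ) with hm_def
  have hn1 : (1:ℝ) ≤ n := by
    have hcard : Multiset.card D ≠ 0 := fun h => hD (Multiset.card_eq_zero.1 h)
    rw [hn_def]
    exact_mod_cast Nat.one_le_iff_ne_zero.2 hcard
  have hn0 : (0:ℝ) < n := lt_of_lt_of_le one_pos hn1
  have hmn : m ≤ n := by
    rw [hm_def, hn_def]
    exact_mod_cast Multiset.card_le_card (Multiset.filter_le _ D)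
  have hm0 : (0:ℝ) ≤ m := by positivity
  have hsh : ∑ a : V, ((D.map A).count a : ℝ) = n := sum_count_map A D
  have hsδ : ∑ a : V, (if a = A t then (1:ℝ) else 0) = 1 := by
    simp
  have hh0 : ∀ a : V, (0:ℝ) ≤ ((D.map A).count a : ℝ) := fun a => by positivity
  have hδ0 : ∀ a : V, (0:ℝ) ≤ (if a = A t then (1:ℝ) else 0) := fun a => by positivity
  by_cases hc : f t = c
  · have hIntp' : Intp (t ::ₘ D) f c A = (1/2) * ∑ a : V,
        |((((cl D f c).map A).count a : ℝ) + (if a = A t then (1:ℝ) else 0)) -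
          ((m + 1) / (n + 1)) *
            (((D.map A).count a : ℝ) + (if a = A t then (1:ℝ) else 0))| := by
      have hcl : cl (t ::ₘ D) f c = t ::ₘ cl D f c := by
        simp [cl, Multiset.filter_cons, hc]
      unfold Intp
      rw [hcl]
      congr 1
      refine Finset.sum_congr rfl fun a _ => ?_
      simp only [Multiset.map_cons, Multiset.count_cons, Multiset.card_cons]
      rw [hm_def, hn_def]
      push_cast
      ring_nf
    rw [hIntp', Intp]
    refine key_core _ _ (fun a => ((D.map A).count a : ℝ))
      (fun a => if a = A t then (1:ℝ) else 0)
      ((n - m) / (n + 1)) ((n - m) / (n * (n + 1))) n ?_ hsh hsδ ?_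
    · intro a
      have egen : ∀ d h g : ℝ, ((g + d) - ((m + 1) / (n + 1)) * (h + d)) - (g - (m / n) * h) =
          ((n - m) / (n + 1)) * d - ((n - m) / (n * (n + 1))) * h := by
        intro d h g
        field_simp
        ring
      rw [egen (if a = A t then (1:ℝ) else 0) (((D.map A).count a : ℝ))
        ((((cl D f c).map A).count a : ℝ))]
      have h1 : (0:ℝ) ≤ ((n - m) / (n + 1)) * (if a = A t then (1:ℝ) else 0) := by
        have := hδ0 a
        have : (0:ℝ) ≤ (n - m) / (n + 1) := by
          apply div_nonneg <;> linarith
        exact mul_nonneg this (hδ0 a)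
      have h2 : (0:ℝ) ≤ ((n - m) / (n * (n + 1))) * ((D.map A).count a : ℝ) := by
        apply mul_nonneg (div_nonneg (by linarith) (by nlinarith)) (hh0 a)
      exact abs_le.2 ⟨by linarith, by linarith⟩
    · have e : (n - m) / (n + 1) + ((n - m) / (n * (n + 1))) * n = 2 * ((n - m) / (n + 1)) := by
        field_simp
        ring
      rw [e]
      have h3 : (n - m) / (n + 1) ≤ 1 := by
        rw [div_le_one (by linarith)]; linarith
      linarith
  · have hIntp' : Intp (t ::ₘ D) f c A = (1/2) * ∑ a : V,
        |(((cl D f c).map A).count a : ℝ) -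
          (m / (n + 1)) *
            (((D.map A).count a : ℝ) + (if a = A t then (1:ℝ) else 0))| := by
      have hcl : cl (t ::ₘ D) f c = cl D f c := by
        simp [cl, Multiset.filter_cons, hc]
      unfold Intp
      rw [hcl]
      congr 1
      refine Finset.sum_congr rfl fun a _ => ?_
      simp only [Multiset.map_cons, Multiset.count_cons, Multiset.card_cons]
      rw [hm_def, hn_def]
      push_cast
      ring_nf
    rw [hIntp', Intp]
    refine key_core _ _ (fun a => ((D.map A).count a : ℝ))
      (fun a => if a = A t then (1:ℝ) else 0)
      (m / (n + 1)) (m / (n * (n + 1))) n ?_ hsh hsδ ?_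
    · intro a
      have egen : ∀ d h g : ℝ, (g - (m / (n + 1)) * (h + d)) - (g - (m / n) * h) =
          (m / (n * (n + 1))) * h - (m / (n + 1)) * d := by
        intro d h g
        field_simp
        ring
      rw [egen (if a = A t then (1:ℝ) else 0) (((D.map A).count a : ℝ))
        ((((cl D f c).map A).count a : ℝ))]
      have h1 : (0:ℝ) ≤ (m / (n + 1)) * (if a = A t then (1:ℝ) else 0) :=
        mul_nonneg (div_nonneg hm0 (by linarith)) (hδ0 a)
      have h2 : (0:ℝ) ≤ (m / (n * (n + 1))) * ((D.map A).count a : ℝ) :=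
        mul_nonneg (div_nonneg hm0 (by nlinarith)) (hh0 a)
      rw [abs_sub_comm]
      exact abs_le.2 ⟨by linarith, by linarith⟩
    · have e : m / (n + 1) + (m / (n * (n + 1))) * n = 2 * (m / (n + 1)) := by
        field_simp
        ring
      rw [e]
      have h3 : m / (n + 1) ≤ 1 := by
        rw [div_le_one (by linarith)]; linarith
      linarith


lemma intp_range {T V C : Type*} [Fintype V] [DecidableEq V] [DecidableEq C]
    (D : Multiset T) (f : T → C) (c : C) (A : T → V) :
    0 ≤ Intp D f c A ∧ Intp D f c A ≤ (Multiset.card (cl D f c) : ℝ) := by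
  constructor
  · unfold Intp; positivity
  · rcases eq_or_ne D 0 with rfl | hD
    · simp [Intp, cl]
    · have hn : (0:ℝ) < (Multiset.card D : ℝ) := by
        exact_mod_cast Multiset.card_pos.2 hD
      have hm0 : (0:ℝ) ≤ (Multiset.card (cl D f c) : ℝ) := by positivity
      calc Intp D f c A
          ≤ (1/2) * ∑ a : V, ((((cl D f c).map A).count a : ℝ) +
            ((Multiset.card (cl D f c) : ℝ) / (Multiset.card D : ℝ)) * ((D.map A).count a : ℝ)) := by
            unfold Intp
            refine mul_le_mul_of_nonneg_left (Finset.sum_le_sum fun a _ => ?_) (by norm_num)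
            have h1 : (0:ℝ) ≤ (((cl D f c).map A).count a : ℝ) := by positivity
            have h2 : (0:ℝ) ≤ ((Multiset.card (cl D f c) : ℝ) / (Multiset.card D : ℝ)) *
              ((D.map A).count a : ℝ) := by positivity
            exact abs_le.2 ⟨by linarith, by linarith⟩
        _ = (Multiset.card (cl D f c) : ℝ) := by
            rw [Finset.sum_add_distrib, ← Finset.mul_sum, sum_count_map, sum_count_map]
            field_simp
            ring

/-- `Int_p` has sensitivity at most `1` and range `[0, |D_c|]`. -/
theorem intp_sensitivity_and_range {T V C : Type*} [Fintype V] [DecidableEq V] [DecidableEq C]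
    (f : T → C) (c : C) (A : T → V) :
    (∀ (D : Multiset T) (t : T), |Intp (t ::ₘ D) f c A - Intp D f c A| ≤ 1) ∧
    (∀ D : Multiset T,
      0 ≤ Intp D f c A ∧ Intp D f c A ≤ (Multiset.card (cl D f c) : ℝ)) := by
  exact ⟨main_sens f c A, fun D => intp_range D f c A⟩
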